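/- Assume A(iω) is invertible for every ω ∈ ℝ. Let ξ > 0 be such that D_ξ := DᵀD − ξ²I is invertible and such that the operator norm ‖G(iω)‖ (as a linear map from ℂ^{n_u} to ℂ^{n_y} with Euclidean norms, i.e. the largest singular value of G(iω)) satisfies ‖G(iω)‖ < ξ for all ω ∈ ℝ. Then det H_ξ(iω) ≠ 0 for every ω ∈ ℝ; i.e. H_ξ has no roots on the imaginary axis when the level ξ exceeds the H∞ norm of G. -/

import Mathlib

open Matrix Complex

noncomputable section

variable {n nu ny m : ℕ}

/-- `D_ξ = Dᵀ D − ξ² I`. -/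
def Dxi (D : Matrix (Fin ny) (Fin nu) ℝ) (ξ : ℝ) : Matrix (Fin nu) (Fin nu) ℝ :=
  Dᵀ * D - ξ ^ 2 • (1 : Matrix (Fin nu) (Fin nu) ℝ)

/-- `(Dᵀ)_ξ = D Dᵀ − ξ² I`, the matrix denoted `D_ξ^{-T}`-inverse base in the paper
(the only dimensionally consistent reading of the `(2,1)` block of `M₀`).
Note that it is invertible iff `D_ξ` is (for `ξ ≠ 0`), since `DᵀD` and `DDᵀ` have the
same nonzero eigenvalues. -/
def DxiT (D : Matrix (Fin ny) (Fin nu) ℝ) (ξ : ℝ) : Matrix (Fin ny) (Fin ny) ℝ :=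
  D * Dᵀ - ξ ^ 2 • (1 : Matrix (Fin ny) (Fin ny) ℝ)

/-- The block matrix `M₀`. -/
def Mzero (A0 : Matrix (Fin n) (Fin n) ℝ) (B : Matrix (Fin n) (Fin nu) ℝ)
    (C : Matrix (Fin ny) (Fin n) ℝ) (D : Matrix (Fin ny) (Fin nu) ℝ) (ξ : ℝ) :
    Matrix (Fin n ⊕ Fin n) (Fin n ⊕ Fin n) ℝ :=
  fromBlocks (A0 - B * (Dxi D ξ)⁻¹ * Dᵀ * C) (-(B * (Dxi D ξ)⁻¹ * Bᵀ))
    (ξ ^ 2 • (Cᵀ * (DxiT D ξ)⁻¹ * C)) (-A0ᵀ + Cᵀ * D * (Dxi D ξ)⁻¹ * Bᵀ)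

/-- The block matrix `Mᵢ` for `1 ≤ i ≤ m`. -/
def Mpos (Ai : Matrix (Fin n) (Fin n) ℝ) : Matrix (Fin n ⊕ Fin n) (Fin n ⊕ Fin n) ℝ :=
  fromBlocks Ai 0 0 0

/-- The block matrix `M₋ᵢ` for `1 ≤ i ≤ m`. -/
def Mneg (Ai : Matrix (Fin n) (Fin n) ℝ) : Matrix (Fin n ⊕ Fin n) (Fin n ⊕ Fin n) ℝ :=
  fromBlocks 0 0 0 (-Aiᵀ)

/-- `H_ξ(λ) = λI − M₀ − Σᵢ (Mᵢ e^{−λτᵢ} + M₋ᵢ e^{λτᵢ})`. -/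
def Hxi (A0 : Matrix (Fin n) (Fin n) ℝ) (A : Fin m → Matrix (Fin n) (Fin n) ℝ)
    (B : Matrix (Fin n) (Fin nu) ℝ) (C : Matrix (Fin ny) (Fin n) ℝ)
    (D : Matrix (Fin ny) (Fin nu) ℝ) (τ : Fin m → ℝ) (ξ : ℝ) (lam : ℂ) :
    Matrix (Fin n ⊕ Fin n) (Fin n ⊕ Fin n) ℂ :=
  lam • (1 : Matrix (Fin n ⊕ Fin n) (Fin n ⊕ Fin n) ℂ)
    - (Mzero A0 B C D ξ).map Complex.ofReal
    - ∑ i : Fin m, (Complex.exp (-lam * (τ i : ℂ)) • (Mpos (A i)).map Complex.ofReal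
        + Complex.exp (lam * (τ i : ℂ)) • (Mneg (A i)).map Complex.ofReal)

/-- `A(λ) = λI − A₀ − Σᵢ Aᵢ e^{−λτᵢ}`. -/
def Amat (A0 : Matrix (Fin n) (Fin n) ℝ) (A : Fin m → Matrix (Fin n) (Fin n) ℝ)
    (τ : Fin m → ℝ) (lam : ℂ) : Matrix (Fin n) (Fin n) ℂ :=
  lam • (1 : Matrix (Fin n) (Fin n) ℂ) - A0.map Complex.ofReal
    - ∑ i : Fin m, Complex.exp (-lam * (τ i : ℂ)) • (A i).map Complex.ofReal

/-- The transfer function `G(λ) = C A(λ)⁻¹ B + D`. -/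
def Gmat (A0 : Matrix (Fin n) (Fin n) ℝ) (A : Fin m → Matrix (Fin n) (Fin n) ℝ)
    (B : Matrix (Fin n) (Fin nu) ℝ) (C : Matrix (Fin ny) (Fin n) ℝ)
    (D : Matrix (Fin ny) (Fin nu) ℝ) (τ : Fin m → ℝ) (lam : ℂ) :
    Matrix (Fin ny) (Fin nu) ℂ :=
  C.map Complex.ofReal * (Amat A0 A τ lam)⁻¹ * B.map Complex.ofReal + D.map Complex.ofReal

/-- `τ_max`, the maximum of the delays. -/
def tauMax [NeZero m] (τ : Fin m → ℝ) : ℝ :=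
  Finset.univ.sup' Finset.univ_nonempty τ

/-- `λ` is an eigenvalue of the infinite-dimensional operator `L_ξ`: there is a continuously
differentiable, not identically zero function `u : [−τ_max, τ_max] → ℂ^{2n}` with
`u′(t) = λ u(t)` on the interval and `u′(0) = M₀ u(0) + Σᵢ (Mᵢ u(−τᵢ) + M₋ᵢ u(τᵢ))`. -/
def IsEigLxi [NeZero m] (A0 : Matrix (Fin n) (Fin n) ℝ) (A : Fin m → Matrix (Fin n) (Fin n) ℝ)
    (B : Matrix (Fin n) (Fin nu) ℝ) (C : Matrix (Fin ny) (Fin n) ℝ)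
    (D : Matrix (Fin ny) (Fin nu) ℝ) (τ : Fin m → ℝ) (ξ : ℝ) (lam : ℂ) : Prop :=
  ∃ u : ℝ → (Fin n ⊕ Fin n → ℂ),
    (∀ t ∈ Set.Icc (-(tauMax τ)) (tauMax τ),
      HasDerivWithinAt u (lam • u t) (Set.Icc (-(tauMax τ)) (tauMax τ)) t) ∧
    (∃ t ∈ Set.Icc (-(tauMax τ)) (tauMax τ), u t ≠ 0) ∧
    lam • u 0 = (Mzero A0 B C D ξ).map Complex.ofReal *ᵥ u 0
      + ∑ i : Fin m, ((Mpos (A i)).map Complex.ofReal *ᵥ u (-(τ i))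
          + (Mneg (A i)).map Complex.ofReal *ᵥ u (τ i))


/-- The operator norm of a complex matrix, viewed as a linear map between Euclidean spaces
(i.e. its largest singular value). -/
def l2OpNorm {a b : ℕ} (M : Matrix (Fin a) (Fin b) ℂ) : ℝ :=
  ‖LinearMap.toContinuousLinearMap (Matrix.toEuclideanLin M)‖

/-! ### Auxiliary lemmas -/

/-- Shorthand for mapping a real matrix to a complex one. -/
def cmap {a b : ℕ} (M : Matrix (Fin a) (Fin b) ℝ) : Matrix (Fin a) (Fin b) ℂ :=
  M.map Complex.ofReal

lemma cmap_mul {a b c : ℕ} (M : Matrix (Fin a) (Fin b) ℝ) (N : Matrix (Fin b) (Fin c) ℝ) :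
    cmap (M * N) = cmap M * cmap N := by
  ext i j
  simp [cmap, Matrix.mul_apply, Matrix.map_apply]

lemma cmap_one {a : ℕ} : cmap (1 : Matrix (Fin a) (Fin a) ℝ) = 1 := by
  ext i j
  simp [cmap, Matrix.one_apply]
  split <;> simp

lemma cmap_conjTranspose {a b : ℕ} (M : Matrix (Fin a) (Fin b) ℝ) :
    (cmap M)ᴴ = cmap Mᵀ := by
  ext i j
  simp [cmap, Matrix.conjTranspose_apply, Matrix.map_apply, Complex.conj_ofReal]

lemma cmap_sub {a b : ℕ} (M N : Matrix (Fin a) (Fin b) ℝ) :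
    cmap (M - N) = cmap M - cmap N := by
  ext i j
  simp [cmap, Matrix.map_apply]

lemma cmap_smul {a b : ℕ} (r : ℝ) (M : Matrix (Fin a) (Fin b) ℝ) :
    cmap (r • M) = (r : ℂ) • cmap M := by
  ext i j
  simp [cmap, Matrix.map_apply]

/-- `ξ² (DDᵀ − ξ²)⁻¹ = D (DᵀD − ξ²)⁻¹ Dᵀ − 1`. -/
lemma DxiT_inv_smul {nu ny : ℕ} (D : Matrix (Fin ny) (Fin nu) ℝ) (ξ : ℝ) (hξ : ξ ≠ 0)
    (hD : IsUnit (Dxi D ξ)) :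
    ξ ^ 2 • (DxiT D ξ)⁻¹ = D * (Dxi D ξ)⁻¹ * Dᵀ - 1 := by
  have hDdet : IsUnit (Dxi D ξ).det := (Matrix.isUnit_iff_isUnit_det _).1 hD
  have hinv : Dxi D ξ * (Dxi D ξ)⁻¹ = 1 := Matrix.mul_nonsing_inv _ hDdet
  have hξ2 : (ξ ^ 2 : ℝ) ≠ 0 := pow_ne_zero _ hξ
  set Q := (Dxi D ξ)⁻¹ with hQ
  have h1 : DxiT D ξ * (D * Q * Dᵀ - 1) = ξ ^ 2 • (1 : Matrix (Fin ny) (Fin ny) ℝ) := by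
    have expand : DxiT D ξ * (D * Q * Dᵀ - 1)
        = D * ((Dᵀ * D - ξ ^ 2 • 1) * Q) * Dᵀ - D * Dᵀ + ξ ^ 2 • (1 : Matrix (Fin ny) (Fin ny) ℝ) := by
      simp only [DxiT, Matrix.sub_mul, Matrix.mul_sub, Matrix.smul_mul, Matrix.mul_smul,
        one_mul, mul_one, Matrix.mul_assoc]
      abel
    rw [expand, show Dᵀ * D - ξ ^ 2 • (1 : Matrix (Fin nu) (Fin nu) ℝ) = Dxi D ξ from rfl,
      hinv, Matrix.mul_one]
    abel
  have h2 : DxiT D ξ * ((ξ ^ 2)⁻¹ • (D * Q * Dᵀ - 1)) = 1 := by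
    rw [mul_smul_comm, h1, smul_smul, inv_mul_cancel₀ hξ2, one_smul]
  rw [Matrix.inv_eq_right_inv h2, smul_smul, mul_inv_cancel₀ hξ2, one_smul]

/-- Block decomposition of `H_ξ(iω)`. -/
lemma Hxi_blocks {n nu ny m : ℕ} (A0 : Matrix (Fin n) (Fin n) ℝ)
    (A : Fin m → Matrix (Fin n) (Fin n) ℝ)
    (B : Matrix (Fin n) (Fin nu) ℝ) (C : Matrix (Fin ny) (Fin n) ℝ)
    (D : Matrix (Fin ny) (Fin nu) ℝ) (τ : Fin m → ℝ) (ξ : ℝ) (hξ : ξ ≠ 0)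
    (hD : IsUnit (Dxi D ξ)) (ω : ℝ) :
    Hxi A0 A B C D τ ξ (Complex.I * ω) = fromBlocks
      (Amat A0 A τ (Complex.I * ω) + cmap (B * (Dxi D ξ)⁻¹ * (Dᵀ * C)))
      (cmap (B * (Dxi D ξ)⁻¹ * Bᵀ))
      (cmap (Cᵀ * C) - cmap (Cᵀ * (D * (Dxi D ξ)⁻¹ * (Dᵀ * C))))
      (-(Amat A0 A τ (Complex.I * ω))ᴴ - cmap (Cᵀ * D * (Dxi D ξ)⁻¹ * Bᵀ)) := by
  have hsm : ξ ^ 2 • (Cᵀ * (DxiT D ξ)⁻¹ * C)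
      = Cᵀ * (D * (Dxi D ξ)⁻¹ * Dᵀ) * C - Cᵀ * C := by
    have : Cᵀ * (ξ ^ 2 • (DxiT D ξ)⁻¹) * C
        = Cᵀ * (D * (Dxi D ξ)⁻¹ * Dᵀ - 1) * C := by
      rw [DxiT_inv_smul D ξ hξ hD]
    simpa [Matrix.mul_smul, Matrix.smul_mul, Matrix.mul_sub, Matrix.sub_mul, mul_one] using this
  have hAH : (Amat A0 A τ (Complex.I * ω))ᴴ
      = -((Complex.I * ω) • (1 : Matrix (Fin n) (Fin n) ℂ)) - cmap A0ᵀ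
        - ∑ i : Fin m, Complex.exp (Complex.I * ω * τ i) • cmap (A i)ᵀ := by
    unfold Amat
    rw [Matrix.conjTranspose_sub, Matrix.conjTranspose_sub]
    congr 1
    · congr 1
      · ext i j
        simp only [Matrix.conjTranspose_apply, Matrix.smul_apply, Matrix.one_apply,
          apply_ite (star : ℂ → ℂ), smul_eq_mul, Matrix.neg_apply, star_mul',
          Complex.star_def, Complex.conj_I, Complex.conj_ofReal, star_zero]
        by_cases h : i = j <;> simp [h, eq_comm] <;> ring
      · ext i j
        simp [cmap, Matrix.conjTranspose_apply, Matrix.map_apply, Complex.conj_ofReal]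
    · ext i j
      simp only [Matrix.conjTranspose_apply, Matrix.sum_apply, star_sum]
      refine Finset.sum_congr rfl fun k _ => ?_
      simp only [Matrix.smul_apply, smul_eq_mul, star_mul', Complex.star_def,
        ← Complex.exp_conj, _root_.map_mul, _root_.map_neg, Complex.conj_I,
        Complex.conj_ofReal, cmap, Matrix.map_apply, Matrix.transpose_apply, neg_mul, neg_neg]
  have hM : Mzero A0 B C D ξ = fromBlocks (A0 - B * (Dxi D ξ)⁻¹ * Dᵀ * C)
      (-(B * (Dxi D ξ)⁻¹ * Bᵀ)) (Cᵀ * (D * (Dxi D ξ)⁻¹ * Dᵀ) * C - Cᵀ * C)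
      (-A0ᵀ + Cᵀ * D * (Dxi D ξ)⁻¹ * Bᵀ) := by
    unfold Mzero; rw [hsm]
  unfold Hxi
  rw [hAH, hM]
  ext s t
  rcases s with i | i <;> rcases t with j | j <;> by_cases h : i = j <;>
    simp [Mpos, Mneg, Amat, Matrix.fromBlocks, cmap, Matrix.sum_apply, h,
      Matrix.one_apply, Matrix.map_apply, Matrix.mul_assoc, Finset.sum_add_distrib,
      Finset.sum_sub_distrib, neg_zero, neg_neg] <;>
    ring_nf <;>
    abel

/-- if `‖G(iω)‖ < ξ` for all `ω ∈ ℝ`, then `det H_ξ(iω) ≠ 0` for all `ω`. -/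
theorem det_Hxi_ne_zero_of_lt [NeZero n] [NeZero nu] [NeZero ny] [NeZero m]
    (A0 : Matrix (Fin n) (Fin n) ℝ) (A : Fin m → Matrix (Fin n) (Fin n) ℝ)
    (B : Matrix (Fin n) (Fin nu) ℝ) (C : Matrix (Fin ny) (Fin n) ℝ)
    (D : Matrix (Fin ny) (Fin nu) ℝ) (τ : Fin m → ℝ) (hτ : ∀ i, 0 ≤ τ i)
    (hA : ∀ ω : ℝ, IsUnit (Amat A0 A τ (Complex.I * ω)))
    (ξ : ℝ) (hξ : 0 < ξ) (hD : IsUnit (Dxi D ξ))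
    (hlt : ∀ ω : ℝ, l2OpNorm (Gmat A0 A B C D τ (Complex.I * ω)) < ξ) :
    ∀ ω : ℝ, (Hxi A0 A B C D τ ξ (Complex.I * ω)).det ≠ 0 := by
  intro ω hdet
  obtain ⟨v, hv0, hv⟩ := Matrix.exists_mulVec_eq_zero_iff.2 hdet
  set lam : ℂ := Complex.I * ω with hlam
  have hAd : IsUnit (Amat A0 A τ lam).det := (Matrix.isUnit_iff_isUnit_det _).1 (hA ω)
  have hAHd : IsUnit ((Amat A0 A τ lam)ᴴ).det := by
    rw [Matrix.det_conjTranspose]; exact hAd.star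
  have hDdet : IsUnit (Dxi D ξ).det := (Matrix.isUnit_iff_isUnit_det _).1 hD
  set x : Fin n → ℂ := fun i => v (Sum.inl i) with hxdef
  set y : Fin n → ℂ := fun i => v (Sum.inr i) with hydef
  have hvxy : v = Sum.elim x y := by funext s; cases s <;> rfl
  rw [Hxi_blocks A0 A B C D τ ξ (ne_of_gt hξ) hD ω, hvxy, Matrix.fromBlocks_mulVec] at hv
  have eq1 : (Amat A0 A τ lam + cmap (B * (Dxi D ξ)⁻¹ * (Dᵀ * C))) *ᵥ x
      + cmap (B * (Dxi D ξ)⁻¹ * Bᵀ) *ᵥ y = 0 := by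
    funext i; exact congrFun hv (Sum.inl i)
  have eq2 : (cmap (Cᵀ * C) - cmap (Cᵀ * (D * (Dxi D ξ)⁻¹ * (Dᵀ * C)))) *ᵥ x
      + (-(Amat A0 A τ lam)ᴴ - cmap (Cᵀ * D * (Dxi D ξ)⁻¹ * Bᵀ)) *ᵥ y = 0 := by
    funext i; exact congrFun hv (Sum.inr i)
  set u : Fin nu → ℂ :=
    -(cmap (Dxi D ξ)⁻¹ *ᵥ (cmap (Dᵀ * C) *ᵥ x + cmap Bᵀ *ᵥ y)) with hu
  set z : Fin ny → ℂ := cmap C *ᵥ x + cmap D *ᵥ u with hz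
  have hQinv : cmap (Dxi D ξ) * cmap (Dxi D ξ)⁻¹ = 1 := by
    rw [← cmap_mul, Matrix.mul_nonsing_inv _ hDdet, cmap_one]
  -- E1 : A(λ) x = B u
  have E1 : Amat A0 A τ lam *ᵥ x = cmap B *ᵥ u := by
    have h1 := eq1
    simp only [Matrix.add_mulVec] at h1
    rw [hu]
    simp only [Matrix.mulVec_neg, Matrix.mulVec_add, Matrix.mulVec_mulVec, cmap_mul,
      Matrix.mul_assoc] at h1 ⊢
    linear_combination (norm := abel) h1
  -- E2 : A(λ)ᴴ y = Cᵀ z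
  have E2 : (Amat A0 A τ lam)ᴴ *ᵥ y = cmap Cᵀ *ᵥ z := by
    have h2 := eq2
    rw [hz, hu]
    simp only [Matrix.add_mulVec, Matrix.sub_mulVec, Matrix.neg_mulVec, Matrix.mulVec_neg,
      Matrix.mulVec_add, cmap_mul, ← Matrix.mulVec_mulVec] at h2 ⊢
    linear_combination (norm := abel) -h2
  -- u in terms of x, y
  have hu_eq : cmap (Dxi D ξ) *ᵥ u = -(cmap Dᵀ *ᵥ (cmap C *ᵥ x)) - cmap Bᵀ *ᵥ y := by
    rw [hu, Matrix.mulVec_neg, Matrix.mulVec_mulVec, hQinv, Matrix.one_mulVec]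
    simp only [cmap_mul, ← Matrix.mulVec_mulVec]
    abel
  -- y in terms of z
  have hy2 : y = ((Amat A0 A τ lam)ᴴ)⁻¹ *ᵥ (cmap Cᵀ *ᵥ z) := by
    rw [← E2, Matrix.mulVec_mulVec, Matrix.nonsing_inv_mul _ hAHd, Matrix.one_mulVec]
  -- conjugate transpose of the transfer function
  have hGH : (Gmat A0 A B C D τ lam)ᴴ
      = cmap Bᵀ * ((Amat A0 A τ lam)ᴴ)⁻¹ * cmap Cᵀ + cmap Dᵀ := by
    show (cmap C * (Amat A0 A τ lam)⁻¹ * cmap B + cmap D)ᴴ = _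
    rw [Matrix.conjTranspose_add, Matrix.conjTranspose_mul, Matrix.conjTranspose_mul,
      Matrix.conjTranspose_nonsing_inv, cmap_conjTranspose, cmap_conjTranspose,
      cmap_conjTranspose, Matrix.mul_assoc]
  have hBty : cmap Bᵀ *ᵥ y = (Gmat A0 A B C D τ lam)ᴴ *ᵥ z - cmap Dᵀ *ᵥ z := by
    rw [hGH, Matrix.add_mulVec, hy2, Matrix.mulVec_mulVec, Matrix.mulVec_mulVec]
    abel
  -- the key identity Gᴴ z = ξ² u
  have hDx : cmap (Dxi D ξ) = cmap Dᵀ * cmap D - ((ξ : ℂ) ^ 2) • 1 := by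
    show cmap (Dᵀ * D - ξ ^ 2 • 1) = _
    rw [cmap_sub, cmap_mul, cmap_smul, cmap_one]
    norm_cast
  have hfinal : (Gmat A0 A B C D τ lam)ᴴ *ᵥ z = ((ξ : ℂ) ^ 2) • u := by
    have h3 := hu_eq
    rw [hBty, hDx, Matrix.sub_mulVec, Matrix.smul_mulVec, Matrix.one_mulVec,
      ← Matrix.mulVec_mulVec] at h3
    rw [hz] at h3
    rw [hz]
    simp only [Matrix.mulVec_add] at h3 ⊢
    linear_combination (norm := abel) h3
  rcases eq_or_ne u 0 with hu0 | hu0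
  · -- u = 0 forces x = y = 0, contradicting v ≠ 0
    have hx0 : x = 0 := by
      have h4 : Amat A0 A τ lam *ᵥ x = 0 := by rw [E1, hu0, Matrix.mulVec_zero]
      have h5 := congrArg (fun w => (Amat A0 A τ lam)⁻¹ *ᵥ w) h4
      simpa [Matrix.mulVec_mulVec, Matrix.nonsing_inv_mul _ hAd, Matrix.one_mulVec,
        Matrix.mulVec_zero] using h5
    have hz0 : z = 0 := by
      rw [hz, hx0, hu0, Matrix.mulVec_zero, Matrix.mulVec_zero, add_zero]
    have hy0 : y = 0 := by
      have h4 : (Amat A0 A τ lam)ᴴ *ᵥ y = 0 := by rw [E2, hz0, Matrix.mulVec_zero]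
      have h5 := congrArg (fun w => ((Amat A0 A τ lam)ᴴ)⁻¹ *ᵥ w) h4
      simpa [Matrix.mulVec_mulVec, Matrix.nonsing_inv_mul _ hAHd, Matrix.one_mulVec,
        Matrix.mulVec_zero] using h5
    apply hv0
    rw [hvxy, hx0, hy0]
    funext s; cases s <;> rfl
  · -- u ≠ 0 : build an eigenvector contradiction with ‖G(iω)‖ < ξ
    have hx2 : x = (Amat A0 A τ lam)⁻¹ *ᵥ (cmap B *ᵥ u) := by
      rw [← E1, Matrix.mulVec_mulVec, Matrix.nonsing_inv_mul _ hAd, Matrix.one_mulVec]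
    have hzGu : z = Gmat A0 A B C D τ lam *ᵥ u := by
      rw [hz, hx2]
      show _ = (cmap C * (Amat A0 A τ lam)⁻¹ * cmap B + cmap D) *ᵥ u
      simp only [Matrix.add_mulVec, ← Matrix.mulVec_mulVec]
    have key : ((ξ : ℂ) ^ 2) * (star u ⬝ᵥ u) = star z ⬝ᵥ z := by
      calc ((ξ : ℂ) ^ 2) * (star u ⬝ᵥ u) = star u ⬝ᵥ (((ξ : ℂ) ^ 2) • u) := by
            rw [dotProduct_smul, smul_eq_mul]
        _ = star u ⬝ᵥ ((Gmat A0 A B C D τ lam)ᴴ *ᵥ z) := by rw [hfinal]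
        _ = (star u ᵥ* (Gmat A0 A B C D τ lam)ᴴ) ⬝ᵥ z := Matrix.dotProduct_mulVec _ _ _
        _ = star (Gmat A0 A B C D τ lam *ᵥ u) ⬝ᵥ z := by rw [Matrix.star_mulVec]
        _ = star z ⬝ᵥ z := by rw [← hzGu]
    have hdot : ∀ {k : ℕ} (w : Fin k → ℂ),
        star w ⬝ᵥ w = ((∑ i, ‖w i‖ ^ 2 : ℝ) : ℂ) := by
      intro k w
      push_cast
      refine Finset.sum_congr rfl fun i _ => ?_
      simp only [Pi.star_apply, Complex.star_def]
      rw [← Complex.normSq_eq_conj_mul_self]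
      rw [Complex.normSq_eq_norm_sq]
      push_cast
      ring
    have keyR : ξ ^ 2 * (∑ i, ‖u i‖ ^ 2) = ∑ i, ‖z i‖ ^ 2 := by
      have := key
      rw [hdot u, hdot z] at this
      exact_mod_cast this
    -- norms in Euclidean space
    set uE : EuclideanSpace ℂ (Fin nu) := (WithLp.equiv 2 _).symm u with huE
    set zE : EuclideanSpace ℂ (Fin ny) := (WithLp.equiv 2 _).symm z with hzE
    have hnormu : ‖uE‖ ^ 2 = ∑ i, ‖u i‖ ^ 2 := by
      rw [EuclideanSpace.norm_eq, Real.sq_sqrt (Finset.sum_nonneg fun i _ => sq_nonneg _)]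
      exact Finset.sum_congr rfl fun i _ => by rw [huE, WithLp.equiv_symm_apply, WithLp.ofLp_toLp]
    have hnormz : ‖zE‖ ^ 2 = ∑ i, ‖z i‖ ^ 2 := by
      rw [EuclideanSpace.norm_eq, Real.sq_sqrt (Finset.sum_nonneg fun i _ => sq_nonneg _)]
      exact Finset.sum_congr rfl fun i _ => by rw [hzE, WithLp.equiv_symm_apply, WithLp.ofLp_toLp]
    have hzEeq : zE = LinearMap.toContinuousLinearMap
        (Matrix.toEuclideanLin (Gmat A0 A B C D τ lam)) uE := by
      rw [LinearMap.coe_toContinuousLinearMap', Matrix.toEuclideanLin_apply, huE, hzE,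
        WithLp.equiv_symm_apply, WithLp.ofLp_toLp, hzGu, WithLp.equiv_symm_apply, WithLp.ofLp_toLp]
    have hle : ‖zE‖ ≤ l2OpNorm (Gmat A0 A B C D τ lam) * ‖uE‖ := by
      rw [hzEeq]
      exact ContinuousLinearMap.le_opNorm _ _
    have huEne : uE ≠ 0 := by
      intro h
      apply hu0
      have := congrArg (WithLp.equiv 2 (Fin nu → ℂ)) h
      rw [huE, Equiv.apply_symm_apply] at this
      simpa using this
    have hupos : (0 : ℝ) < ‖uE‖ := norm_pos_iff.2 huEne
    have hlt' : ‖zE‖ < ξ * ‖uE‖ :=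
      lt_of_le_of_lt hle (mul_lt_mul_of_pos_right (hlt ω) hupos)
    have hsq : ‖zE‖ ^ 2 < (ξ * ‖uE‖) ^ 2 := by
      have h0 : (0 : ℝ) ≤ ‖zE‖ := norm_nonneg _
      nlinarith
    rw [hnormz, ← keyR, mul_pow, hnormu] at hsq
    exact lt_irrefl _ hsq
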